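/- Let Λ be a strongly connected finite k-graph, suppose m, n ∈ ℕ^k satisfy m − n ∈ Per Λ, and let μ ∈ Λ^m. Set p := (m ∨ n) − m and q := (m ∨ n) − n (coordinatewise maximum). Then Λ^min(θ_{m,n}(μ), μ) = {(α, θ_{q,p}(α)) : α ∈ s(μ)Λ^q}. -/

import Mathlib

/-- A higher-rank graph (`k`-graph): a countable category with a degree functor
`d : Λ → ℕ^k` satisfying the unique factorisation property.  Morphisms are called
paths; the vertices are the paths of degree `0` (the identity morphisms).
`r` and `s` are the codomain (range) and domain (source) maps.  By convention
`Λ^{e_i} ≠ ∅` for each standard generator `e_i` of `ℕ^k`. -/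
structure KGraph (k : ℕ) where
  Path : Type
  countable : Countable Path
  d : Path → Fin k → ℕ
  r : Path → Path
  s : Path → Path
  d_r : ∀ lam, d (r lam) = 0
  d_s : ∀ lam, d (s lam) = 0
  r_vertex : ∀ v, d v = 0 → r v = v
  s_vertex : ∀ v, d v = 0 → s v = v
  comp : ∀ μ ν : Path, s μ = r ν → Path
  r_comp : ∀ μ ν h, r (comp μ ν h) = r μ
  s_comp : ∀ μ ν h, s (comp μ ν h) = s ν
  d_comp : ∀ μ ν h, d (comp μ ν h) = d μ + d ν
  id_comp : ∀ lam (h : s (r lam) = r lam), comp (r lam) lam h = lam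
  comp_id : ∀ lam (h : s lam = r (s lam)), comp lam (s lam) h = lam
  assoc : ∀ μ ν τ (h1 : s μ = r ν) (h2 : s ν = r τ)
      (h3 : s (comp μ ν h1) = r τ) (h4 : s μ = r (comp ν τ h2)),
      comp (comp μ ν h1) τ h3 = comp μ (comp ν τ h2) h4
  factor : ∀ (lam : Path) (m n : Fin k → ℕ), d lam = m + n →
      ∃! μν : Path × Path, ∃ h : s μν.1 = r μν.2,
        d μν.1 = m ∧ d μν.2 = n ∧ comp μν.1 μν.2 h = lam
  edge_nonempty : ∀ i : Fin k, ∃ lam, d lam = Pi.single i 1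

namespace KGraph

variable {k : ℕ}

/-- The vertices of a `k`-graph: the paths of degree `0`. -/
abbrev Vertex (Λ : KGraph k) : Type := {v : Λ.Path // Λ.d v = 0}

/-- A `k`-graph is finite if `Λ^n` is finite for every `n ∈ ℕ^k`. -/
def IsFinite (Λ : KGraph k) : Prop := ∀ n : Fin k → ℕ, {lam : Λ.Path | Λ.d lam = n}.Finite

/-- A `k`-graph is strongly connected if `vΛw ≠ ∅` for all vertices `v, w`. -/
def StronglyConnected (Λ : KGraph k) : Prop :=
  ∀ v w : Λ.Path, Λ.d v = 0 → Λ.d w = 0 → ∃ lam : Λ.Path, Λ.r lam = v ∧ Λ.s lam = w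

/-- `Λ^min(μ,ν) = {(α,β) : μα = νβ, d(μα) = d(μ) ∨ d(ν)}`. -/
def minSet (Λ : KGraph k) (μ ν : Λ.Path) : Set (Λ.Path × Λ.Path) :=
  {p | ∃ (h1 : Λ.s μ = Λ.r p.1) (h2 : Λ.s ν = Λ.r p.2),
      Λ.comp μ p.1 h1 = Λ.comp ν p.2 h2 ∧ Λ.d μ + Λ.d p.1 = Λ.d μ ⊔ Λ.d ν}

end KGraph

/-- An infinite path in a `k`-graph `Λ`: a degree-preserving functor `x : Ω_k → Λ`,
recorded by its values `x(m,n)` for `m ≤ n` in `ℕ^k`. -/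
structure InfinitePath {k : ℕ} (Λ : KGraph k) where
  toFun : ∀ m n : Fin k → ℕ, m ≤ n → Λ.Path
  d_eq : ∀ m n h, Λ.d (toFun m n h) = n - m
  src : ∀ m n h, Λ.s (toFun m n h) = toFun n n le_rfl
  rng : ∀ m n h, Λ.r (toFun m n h) = toFun m m le_rfl
  comp_eq : ∀ m n p (h1 : m ≤ n) (h2 : n ≤ p)
      (hc : Λ.s (toFun m n h1) = Λ.r (toFun n p h2)),
      Λ.comp (toFun m n h1) (toFun n p h2) hc = toFun m p (h1.trans h2)

namespace InfinitePath

variable {k : ℕ} {Λ : KGraph k}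

/-- The shift map `σ^n` on the infinite-path space, `σ^n(x)(p,q) = x(n+p, n+q)`. -/
def shift (x : InfinitePath Λ) (n : Fin k → ℕ) : InfinitePath Λ where
  toFun p q h := x.toFun (n + p) (n + q) (add_le_add (le_refl n) h)
  d_eq p q h := by
    rw [x.d_eq]
    funext i
    exact Nat.add_sub_add_left (n i) (q i) (p i)
  src p q h := x.src _ _ _
  rng p q h := x.rng _ _ _
  comp_eq p q t h1 h2 hc := x.comp_eq _ _ _ _ _ hc

/-- The range `r(x) = x(0,0)` of an infinite path. -/
def range (x : InfinitePath Λ) : Λ.Path := x.toFun 0 0 le_rfl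

end InfinitePath

/-- `ExtEq Λ lam y x` says that `y = lam · x`, i.e. `y(0, d(lam)) = lam` and
`σ^{d(lam)}(y) = x`.  (Such an extension is unique when it exists.) -/
def KGraph.ExtEq {k : ℕ} (Λ : KGraph k) (lam : Λ.Path) (y x : InfinitePath Λ) : Prop :=
  y.toFun 0 (Λ.d lam) zero_le = lam ∧ y.shift (Λ.d lam) = x

/-- `Λ.IsTheta m n μ ν` says that `μ ∈ Λ^m`, `ν ∈ Λ^n`, and `μx = νx` for every
infinite path `x ∈ Z(s(μ))`; i.e. `ν = θ_{m,n}(μ)`. -/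
def KGraph.IsTheta {k : ℕ} (Λ : KGraph k) (m n : Fin k → ℕ) (μ ν : Λ.Path) : Prop :=
  Λ.d μ = m ∧ Λ.d ν = n ∧
    ∀ x : InfinitePath Λ, x.range = Λ.s μ →
      ∃ y : InfinitePath Λ, Λ.ExtEq μ y x ∧ Λ.ExtEq ν y x

/-- The periodicity group `Per Λ = {m − n : σ^m(x) = σ^n(x) for all x ∈ Λ^∞} ⊆ ℤ^k`. -/
def KGraph.Per {k : ℕ} (Λ : KGraph k) : Set (Fin k → ℤ) :=
  {g | ∃ m n : Fin k → ℕ, (∀ i, (m i : ℤ) - n i = g i) ∧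
      ∀ x : InfinitePath Λ, x.shift m = x.shift n}

/-- `Λ` is aperiodic if every vertex `v` admits `x ∈ Z(v)` with
`σ^m(x) ≠ σ^n(x)` for all `m ≠ n` in `ℕ^k`. -/
def KGraph.Aperiodic {k : ℕ} (Λ : KGraph k) : Prop :=
  ∀ v : Λ.Path, Λ.d v = 0 → ∃ x : InfinitePath Λ, x.range = v ∧
    ∀ m n : Fin k → ℕ, m ≠ n → x.shift m ≠ x.shift n

namespace KGraph

variable {k : ℕ} (Λ : KGraph k)

/-- Canonical factorisation of a path at a given pair of degrees. -/
noncomputable def split (τ : Λ.Path) (a b : Fin k → ℕ) (h : Λ.d τ = a + b) :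
    Λ.Path × Λ.Path :=
  (Λ.factor τ a b h).exists.choose

lemma split_spec (τ : Λ.Path) (a b : Fin k → ℕ) (h : Λ.d τ = a + b) :
    ∃ hc : Λ.s (Λ.split τ a b h).1 = Λ.r (Λ.split τ a b h).2,
      Λ.d (Λ.split τ a b h).1 = a ∧ Λ.d (Λ.split τ a b h).2 = b ∧
        Λ.comp (Λ.split τ a b h).1 (Λ.split τ a b h).2 hc = τ :=
  (Λ.factor τ a b h).exists.choose_spec

lemma split_unique (τ : Λ.Path) (a b : Fin k → ℕ) (h : Λ.d τ = a + b)
    {u w : Λ.Path} (hc : Λ.s u = Λ.r w) (hu : Λ.d u = a) (hw : Λ.d w = b)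
    (he : Λ.comp u w hc = τ) : (u, w) = Λ.split τ a b h := by
  obtain ⟨hc', h1, h2, h3⟩ := Λ.split_spec τ a b h
  have := (Λ.factor τ a b h).unique (y₁ := (u, w)) (y₂ := Λ.split τ a b h)
    ⟨hc, hu, hw, he⟩ ⟨hc', h1, h2, h3⟩
  exact this

lemma comp_congr {u u' w w' : Λ.Path} (h : Λ.s u = Λ.r w) (h' : Λ.s u' = Λ.r w')
    (hu : u = u') (hw : w = w') : Λ.comp u w h = Λ.comp u' w' h' := by
  subst hu; subst hw; rfl

/-- Uniqueness of factorisations: two factorisations of the same path with the same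
first-factor degree agree. -/
lemma comp_inj {u u' w w' : Λ.Path} (hc : Λ.s u = Λ.r w) (hc' : Λ.s u' = Λ.r w')
    (hd : Λ.d u = Λ.d u') (he : Λ.comp u w hc = Λ.comp u' w' hc') :
    u = u' ∧ w = w' := by
  have hdw : Λ.d w = Λ.d w' := by
    have h1 : Λ.d u + Λ.d w = Λ.d u' + Λ.d w' := by
      rw [← Λ.d_comp u w hc, ← Λ.d_comp u' w' hc', he]
    have := hd ▸ h1
    exact add_left_cancel this
  have hτ : Λ.d (Λ.comp u w hc) = Λ.d u + Λ.d w := Λ.d_comp u w hc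
  have e1 := Λ.split_unique (Λ.comp u w hc) (Λ.d u) (Λ.d w) hτ hc rfl rfl rfl
  have e2 := Λ.split_unique (Λ.comp u w hc) (Λ.d u) (Λ.d w) hτ hc' hd.symm hdw.symm he.symm
  have := e1.trans e2.symm
  exact ⟨congrArg Prod.fst this, congrArg Prod.snd this⟩

lemma sub_add_of_le {a b : Fin k → ℕ} (h : a ≤ b) : a + (b - a) = b := by
  funext i
  have hi : a i ≤ b i := h i
  simp only [Pi.add_apply, Pi.sub_apply]
  omega

/-- The prefix of degree `a` of a path `τ`. -/
noncomputable def pfx (τ : Λ.Path) (a : Fin k → ℕ) (h : a ≤ Λ.d τ) : Λ.Path :=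
  (Λ.split τ a (Λ.d τ - a) (sub_add_of_le h).symm).1

lemma pfx_spec (τ : Λ.Path) (a : Fin k → ℕ) (h : a ≤ Λ.d τ) :
    Λ.d (Λ.pfx τ a h) = a ∧ Λ.r (Λ.pfx τ a h) = Λ.r τ ∧
      ∃ (w : Λ.Path) (hc : Λ.s (Λ.pfx τ a h) = Λ.r w), Λ.d w = Λ.d τ - a ∧
        Λ.comp (Λ.pfx τ a h) w hc = τ := by
  obtain ⟨hc, h1, h2, h3⟩ := Λ.split_spec τ a (Λ.d τ - a) (sub_add_of_le h).symm
  refine ⟨h1, ?_, _, hc, h2, h3⟩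
  conv_rhs => rw [← h3, Λ.r_comp]
  rfl

lemma d_pfx (τ : Λ.Path) (a : Fin k → ℕ) (h : a ≤ Λ.d τ) : Λ.d (Λ.pfx τ a h) = a :=
  (Λ.pfx_spec τ a h).1

/-- `pfx` picks out the unique prefix. -/
lemma pfx_eq_of_comp {τ u w : Λ.Path} (hc : Λ.s u = Λ.r w) (he : Λ.comp u w hc = τ)
    {a : Fin k → ℕ} (hu : Λ.d u = a) (h : a ≤ Λ.d τ) : Λ.pfx τ a h = u := by
  obtain ⟨h1, _, w', hc', h2, h3⟩ := Λ.pfx_spec τ a h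
  exact (Λ.comp_inj hc' hc (by rw [h1, hu]) (h3.trans he.symm)).1

lemma pfx_comp {u w : Λ.Path} (hc : Λ.s u = Λ.r w) (a : Fin k → ℕ) (ha : a ≤ Λ.d u)
    (h : a ≤ Λ.d (Λ.comp u w hc)) : Λ.pfx (Λ.comp u w hc) a h = Λ.pfx u a ha := by
  obtain ⟨h1, _, w', hc', h2, h3⟩ := Λ.pfx_spec u a ha
  -- comp u w = comp (comp (pfx u a) w') w = comp (pfx u a) (comp w' w)
  have hcw : Λ.s w' = Λ.r w := by rw [← hc]; rw [← h3, Λ.s_comp]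
  have h4 : Λ.s (Λ.comp (Λ.pfx u a ha) w' hc') = Λ.r w := by rw [Λ.s_comp]; exact hcw
  have h5 : Λ.s (Λ.pfx u a ha) = Λ.r (Λ.comp w' w hcw) := by rw [Λ.r_comp]; exact hc'
  have := Λ.assoc (Λ.pfx u a ha) w' w hc' hcw h4 h5
  have he : Λ.comp (Λ.pfx u a ha) (Λ.comp w' w hcw) h5 = Λ.comp u w hc := by
    rw [← this]
    exact Λ.comp_congr _ _ h3 rfl
  exact Λ.pfx_eq_of_comp h5 he h1 h

lemma pfx_pfx {τ : Λ.Path} (a b : Fin k → ℕ) (hab : a ≤ b) (hb : b ≤ Λ.d τ)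
    (ha : a ≤ Λ.d (Λ.pfx τ b hb)) :
    Λ.pfx (Λ.pfx τ b hb) a ha = Λ.pfx τ a (hab.trans hb) := by
  obtain ⟨h1, _, w', hc', h2, h3⟩ := Λ.pfx_spec τ b hb
  have := Λ.pfx_comp hc' a ha (by rw [h3]; exact hab.trans hb)
  rw [← this]
  congr 1

lemma pfx_self (τ : Λ.Path) (h : Λ.d τ ≤ Λ.d τ) : Λ.pfx τ (Λ.d τ) h = τ := by
  have hc : Λ.s τ = Λ.r (Λ.s τ) := (Λ.r_vertex _ (Λ.d_s τ)).symm
  exact Λ.pfx_eq_of_comp hc (Λ.comp_id τ hc) rfl h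

lemma pfx_zero (τ : Λ.Path) (h : (0 : Fin k → ℕ) ≤ Λ.d τ) : Λ.pfx τ 0 h = Λ.r τ := by
  have hc : Λ.s (Λ.r τ) = Λ.r τ := Λ.s_vertex _ (Λ.d_r τ)
  exact Λ.pfx_eq_of_comp hc (Λ.id_comp τ hc) (Λ.d_r τ) h

end KGraph
namespace InfinitePath

variable {k : ℕ} {Λ : KGraph k}

lemma toFun_congr (x : InfinitePath Λ) {a b a' b' : Fin k → ℕ} (ha : a = a') (hb : b = b')
    (h : a ≤ b) (h' : a' ≤ b') : x.toFun a b h = x.toFun a' b' h' := by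
  subst ha; subst hb; rfl

lemma ext' {x y : InfinitePath Λ} (h : ∀ a b (hab : a ≤ b), x.toFun a b hab = y.toFun a b hab) :
    x = y := by
  cases x with
  | mk xt xd xs xr xc =>
    cases y with
    | mk yt yd ys yr yc =>
      have : xt = yt := by
        funext a b hab
        exact h a b hab
      subst this
      rfl

lemma src_rng (x : InfinitePath Λ) {a b : Fin k → ℕ} (hab : a ≤ b) (c : Fin k → ℕ)
    (hbc : b ≤ c) : Λ.s (x.toFun a b hab) = Λ.r (x.toFun b c hbc) := by
  rw [x.src, x.rng]

lemma ext0 {x y : InfinitePath Λ} (h : ∀ b, x.toFun 0 b zero_le = y.toFun 0 b zero_le) :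
    x = y := by
  apply ext'
  intro a b hab
  have hx := x.comp_eq 0 a b zero_le hab (x.src_rng _ _ _)
  have hy := y.comp_eq 0 a b zero_le hab (y.src_rng _ _ _)
  have he : Λ.comp (x.toFun 0 a zero_le) (x.toFun a b hab) (x.src_rng _ _ _)
      = Λ.comp (y.toFun 0 a zero_le) (y.toFun a b hab) (y.src_rng _ _ _) := by
    rw [hx, hy]
    exact h b
  exact (Λ.comp_inj _ _ (by rw [x.d_eq, y.d_eq]) he).2

lemma shift_toFun (x : InfinitePath Λ) (c a b : Fin k → ℕ) (h : a ≤ b) :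
    (x.shift c).toFun a b h = x.toFun (c + a) (c + b) (add_le_add (le_refl c) h) := rfl

lemma shift_shift (x : InfinitePath Λ) (a b : Fin k → ℕ) :
    (x.shift a).shift b = x.shift (a + b) := by
  apply ext'
  intro p q h
  show x.toFun (a + (b + p)) (a + (b + q)) _ = x.toFun (a + b + p) (a + b + q) _
  exact x.toFun_congr (by ring) (by ring) _ _

end InfinitePath

namespace KGraph

variable {k : ℕ} (Λ : KGraph k)

section Tower

variable (f : (Fin k → ℕ) → Λ.Path) (hd : ∀ a, Λ.d (f a) = a)
  (hcoh : ∀ a b (hab : a ≤ b), Λ.pfx (f b) a (by rw [hd]; exact hab) = f a)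

include hd hcoh in
lemma tower_exists : ∀ a b : Fin k → ℕ, a ≤ b →
    ∃ (w : Λ.Path) (hc : Λ.s (f a) = Λ.r w), Λ.d w = b - a ∧ Λ.comp (f a) w hc = f b := by
  intro a b hab
  obtain ⟨h1, _, w, hc, h2, h3⟩ := Λ.pfx_spec (f b) a (by rw [hd]; exact hab)
  have hp := hcoh a b hab
  refine ⟨w, by rw [← hp]; exact hc, by rw [h2, hd], ?_⟩
  exact (Λ.comp_congr _ hc hp.symm rfl).trans h3

/-- Build an infinite path from a coherent tower of finite paths. -/
noncomputable def ofTower : InfinitePath Λ where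
  toFun a b hab := (Λ.tower_exists f hd hcoh a b hab).choose
  d_eq a b hab := (Λ.tower_exists f hd hcoh a b hab).choose_spec.choose_spec.1
  src a b hab := by
    obtain ⟨hc, h2, h3⟩ := (Λ.tower_exists f hd hcoh a b hab).choose_spec
    obtain ⟨hc', h2', h3'⟩ := (Λ.tower_exists f hd hcoh b b le_rfl).choose_spec
    have hs : Λ.s (Λ.tower_exists f hd hcoh a b hab).choose = Λ.s (f b) :=
      (Λ.s_comp _ _ _).symm.trans (congrArg Λ.s h3)
    have hid : Λ.comp (f b) (Λ.s (f b)) ((Λ.r_vertex _ (Λ.d_s _)).symm) = f b :=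
      Λ.comp_id (f b) _
    exact hs.trans (Λ.comp_inj _ _ rfl (hid.trans h3'.symm)).2
  rng a b hab := by
    obtain ⟨hc, h2, h3⟩ := (Λ.tower_exists f hd hcoh a b hab).choose_spec
    obtain ⟨hc', h2', h3'⟩ := (Λ.tower_exists f hd hcoh a a le_rfl).choose_spec
    have hid : Λ.comp (f a) (Λ.s (f a)) ((Λ.r_vertex _ (Λ.d_s _)).symm) = f a :=
      Λ.comp_id (f a) _
    exact hc.symm.trans (Λ.comp_inj _ _ rfl (hid.trans h3'.symm)).2
  comp_eq a b c h1 h2 hc := by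
    obtain ⟨hcab, h2ab, h3ab⟩ := (Λ.tower_exists f hd hcoh a b h1).choose_spec
    obtain ⟨hcbc, h2bc, h3bc⟩ := (Λ.tower_exists f hd hcoh b c h2).choose_spec
    obtain ⟨hcac, h2ac, h3ac⟩ := (Λ.tower_exists f hd hcoh a c (h1.trans h2)).choose_spec
    have hcw : Λ.s (Λ.tower_exists f hd hcoh a b h1).choose
        = Λ.r (Λ.tower_exists f hd hcoh b c h2).choose := hc
    have h4 : Λ.s (Λ.comp (f a) _ hcab) = Λ.r (Λ.tower_exists f hd hcoh b c h2).choose := by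
      rw [Λ.s_comp]; exact hcw
    have h5 : Λ.s (f a) = Λ.r (Λ.comp _ _ hcw) := by rw [Λ.r_comp]; exact hcab
    have he : Λ.comp (f a) (Λ.comp _ _ hcw) h5 = Λ.comp (f a) _ hcac :=
      ((Λ.assoc (f a) _ _ hcab hcw h4 h5).symm.trans
        (((Λ.comp_congr h4 hcbc h3ab rfl).trans h3bc).trans h3ac.symm))
    exact (Λ.comp_inj h5 hcac rfl he).2

lemma ofTower_toFun_zero (b : Fin k → ℕ) :
    (Λ.ofTower f hd hcoh).toFun 0 b zero_le = f b := by
  obtain ⟨hc, h2, h3⟩ := (Λ.tower_exists f hd hcoh 0 b zero_le).choose_spec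
  show (Λ.tower_exists f hd hcoh 0 b zero_le).choose = f b
  have hveq : f 0 = Λ.r (Λ.tower_exists f hd hcoh 0 b zero_le).choose := by
    rw [← hc]; exact (Λ.s_vertex _ (hd 0)).symm
  have hid : Λ.comp (Λ.r (Λ.tower_exists f hd hcoh 0 b zero_le).choose) _
      (Λ.s_vertex _ (Λ.d_r _)) = (Λ.tower_exists f hd hcoh 0 b zero_le).choose :=
    Λ.id_comp _ _
  exact ((Λ.comp_congr hc _ hveq rfl).trans hid).symm.trans h3

end Tower

end KGraph
namespace KGraph

variable {k : ℕ} (Λ : KGraph k)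

lemma pfx_of_deg {τ : Λ.Path} {a : Fin k → ℕ} (hu : Λ.d τ = a) (h : a ≤ Λ.d τ) :
    Λ.pfx τ a h = τ := by
  have hc : Λ.s τ = Λ.r (Λ.s τ) := (Λ.r_vertex _ (Λ.d_s τ)).symm
  exact Λ.pfx_eq_of_comp hc (Λ.comp_id τ hc) hu h

lemma pfx_congr {τ τ' : Λ.Path} (hττ : τ = τ') {a : Fin k → ℕ} (h : a ≤ Λ.d τ)
    (h' : a ≤ Λ.d τ') : Λ.pfx τ a h = Λ.pfx τ' a h' := by subst hττ; rfl

section Extend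

variable (lam : Λ.Path) (x : InfinitePath Λ)

lemma extend_hc (h : Λ.s lam = x.range) (c : Fin k → ℕ) : Λ.s lam = Λ.r (x.toFun 0 c zero_le) :=
  h.trans (x.rng 0 c zero_le).symm

lemma extend_hd (h : Λ.s lam = x.range) (a : Fin k → ℕ) :
    Λ.d (Λ.comp lam (x.toFun 0 ((a ⊔ Λ.d lam) - Λ.d lam) zero_le)
      (Λ.extend_hc lam x h _)) = a ⊔ Λ.d lam := by
  rw [Λ.d_comp, x.d_eq]
  funext i
  simp only [Pi.add_apply, Pi.sub_apply, Pi.sup_apply, Pi.zero_apply]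
  omega

/-- The tower of finite prefixes of the extension `lam · x`. -/
noncomputable def extendF (h : Λ.s lam = x.range) (a : Fin k → ℕ) : Λ.Path :=
  Λ.pfx (Λ.comp lam (x.toFun 0 ((a ⊔ Λ.d lam) - Λ.d lam) zero_le)
    (Λ.extend_hc lam x h _)) a (by rw [Λ.extend_hd lam x h]; exact le_sup_left)

lemma extendF_d (h : Λ.s lam = x.range) (a : Fin k → ℕ) : Λ.d (Λ.extendF lam x h a) = a := Λ.d_pfx _ _ _

lemma extendF_coh (h : Λ.s lam = x.range) (a b : Fin k → ℕ) (hab : a ≤ b)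
    (h' : a ≤ Λ.d (Λ.extendF lam x h b)) :
    Λ.pfx (Λ.extendF lam x h b) a h' = Λ.extendF lam x h a := by
  set e := Λ.d lam with he
  have hcab : (a ⊔ e) - e ≤ (b ⊔ e) - e := by
    intro i
    have hi : a i ≤ b i := hab i
    simp only [Pi.sub_apply, Pi.sup_apply]
    omega
  have hxc := x.comp_eq 0 ((a ⊔ e) - e) ((b ⊔ e) - e) zero_le hcab (x.src_rng _ _ _)
  have h4 : Λ.s (Λ.comp lam (x.toFun 0 ((a ⊔ e) - e) zero_le) (Λ.extend_hc lam x h _))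
      = Λ.r (x.toFun ((a ⊔ e) - e) ((b ⊔ e) - e) hcab) := by
    rw [Λ.s_comp]; exact x.src_rng _ _ _
  have h5 : Λ.s lam = Λ.r (Λ.comp (x.toFun 0 ((a ⊔ e) - e) zero_le)
      (x.toFun ((a ⊔ e) - e) ((b ⊔ e) - e) hcab) (x.src_rng _ _ _)) := by
    rw [Λ.r_comp]; exact Λ.extend_hc lam x h _
  have hbig : Λ.comp (Λ.comp lam (x.toFun 0 ((a ⊔ e) - e) zero_le)
        (Λ.extend_hc lam x h _)) (x.toFun ((a ⊔ e) - e) ((b ⊔ e) - e) hcab) h4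
      = Λ.comp lam (x.toFun 0 ((b ⊔ e) - e) zero_le) (Λ.extend_hc lam x h _) := by
    refine (Λ.assoc _ _ _ _ _ h4 h5).trans ?_
    exact Λ.comp_congr h5 _ rfl hxc
  have hCa : a ≤ Λ.d (Λ.comp lam (x.toFun 0 ((a ⊔ e) - e) zero_le)
      (Λ.extend_hc lam x h _)) := by rw [Λ.extend_hd lam x h]; exact le_sup_left
  have hCb : a ≤ Λ.d (Λ.comp lam (x.toFun 0 ((b ⊔ e) - e) zero_le)
      (Λ.extend_hc lam x h _)) := by
    rw [Λ.extend_hd lam x h]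
    exact le_trans (le_trans hab le_sup_left) le_rfl
  have hcomp4 : a ≤ Λ.d (Λ.comp (Λ.comp lam (x.toFun 0 ((a ⊔ e) - e) zero_le)
      (Λ.extend_hc lam x h _)) (x.toFun ((a ⊔ e) - e) ((b ⊔ e) - e) hcab) h4) := by
    rw [hbig]; exact hCb
  calc Λ.pfx (Λ.extendF lam x h b) a h'
      = Λ.pfx (Λ.comp lam (x.toFun 0 ((b ⊔ e) - e) zero_le) (Λ.extend_hc lam x h _))
          a hCb := by
        refine (Λ.pfx_pfx a b hab ?_ ?_).trans ?_
        · exact Λ.pfx_congr rfl _ _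
    _ = Λ.pfx (Λ.comp (Λ.comp lam (x.toFun 0 ((a ⊔ e) - e) zero_le)
          (Λ.extend_hc lam x h _)) (x.toFun ((a ⊔ e) - e) ((b ⊔ e) - e) hcab) h4) a
          hcomp4 := Λ.pfx_congr hbig.symm _ _
    _ = Λ.pfx (Λ.comp lam (x.toFun 0 ((a ⊔ e) - e) zero_le) (Λ.extend_hc lam x h _))
          a hCa := Λ.pfx_comp h4 a hCa _
    _ = Λ.extendF lam x h a := rfl

/-- The extension `lam · x` of an infinite path by a finite path. -/
noncomputable def extendPath (h : Λ.s lam = x.range) : InfinitePath Λ :=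
  Λ.ofTower (Λ.extendF lam x h) (Λ.extendF_d lam x h)
    (fun a b hab => Λ.extendF_coh lam x h a b hab _)

lemma extendPath_toFun_zero (h : Λ.s lam = x.range) (b : Fin k → ℕ) :
    (Λ.extendPath lam x h).toFun 0 b zero_le = Λ.extendF lam x h b :=
  Λ.ofTower_toFun_zero _ _ _ b

end Extend

end KGraph
namespace KGraph

variable {k : ℕ} (Λ : KGraph k)

section ExtendLemmas

variable (lam : Λ.Path) (x : InfinitePath Λ)

lemma extendF_top (h : Λ.s lam = x.range) :
    Λ.extendF lam x h (Λ.d lam) = lam :=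
  Λ.pfx_eq_of_comp (Λ.extend_hc lam x h _) rfl rfl _

lemma extendF_add (h : Λ.s lam = x.range) (c : Fin k → ℕ) :
    Λ.extendF lam x h (Λ.d lam + c)
      = Λ.comp lam (x.toFun 0 c zero_le) (Λ.extend_hc lam x h c) := by
  have hc' : ((Λ.d lam + c) ⊔ Λ.d lam) - Λ.d lam = c := by
    funext i
    simp only [Pi.sub_apply, Pi.sup_apply, Pi.add_apply]
    omega
  have hC : Λ.comp lam (x.toFun 0 (((Λ.d lam + c) ⊔ Λ.d lam) - Λ.d lam) zero_le)
        (Λ.extend_hc lam x h _)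
      = Λ.comp lam (x.toFun 0 c zero_le) (Λ.extend_hc lam x h c) :=
    Λ.comp_congr _ _ rfl (x.toFun_congr rfl hc' _ _)
  have hd : Λ.d (Λ.comp lam (x.toFun 0 (((Λ.d lam + c) ⊔ Λ.d lam) - Λ.d lam) zero_le)
      (Λ.extend_hc lam x h _)) = Λ.d lam + c := by
    rw [Λ.extend_hd lam x h]
    funext i
    simp only [Pi.sup_apply, Pi.add_apply]
    omega
  exact (Λ.pfx_of_deg hd _).trans hC

lemma extendPath_prefix (h : Λ.s lam = x.range) :
    (Λ.extendPath lam x h).toFun 0 (Λ.d lam) zero_le = lam :=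
  (Λ.extendPath_toFun_zero lam x h _).trans (Λ.extendF_top lam x h)

lemma extendPath_shift (h : Λ.s lam = x.range) :
    (Λ.extendPath lam x h).shift (Λ.d lam) = x := by
  apply InfinitePath.ext0
  intro b
  set y := Λ.extendPath lam x h with hy
  have hle : Λ.d lam ≤ Λ.d lam + b := le_self_add
  have hpre : y.toFun 0 (Λ.d lam) zero_le = lam := Λ.extendPath_prefix lam x h
  have hcr : Λ.s lam = Λ.r (y.toFun (Λ.d lam) (Λ.d lam + b) hle) :=
    (congrArg Λ.s hpre.symm).trans (y.src_rng zero_le _ hle)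
  have hcompeq := y.comp_eq 0 (Λ.d lam) (Λ.d lam + b) zero_le hle (y.src_rng _ _ _)
  have h1 : y.toFun 0 (Λ.d lam + b) zero_le
      = Λ.comp lam (x.toFun 0 b zero_le) (Λ.extend_hc lam x h b) :=
    (Λ.extendPath_toFun_zero lam x h _).trans (Λ.extendF_add lam x h b)
  have h2 : Λ.comp (y.toFun 0 (Λ.d lam) zero_le) (y.toFun (Λ.d lam) (Λ.d lam + b) hle)
        (y.src_rng _ _ _)
      = Λ.comp lam (y.toFun (Λ.d lam) (Λ.d lam + b) hle) hcr :=
    Λ.comp_congr _ _ hpre rfl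
  have h3 : Λ.comp lam (y.toFun (Λ.d lam) (Λ.d lam + b) hle) hcr
      = Λ.comp lam (x.toFun 0 b zero_le) (Λ.extend_hc lam x h b) :=
    (h2.symm.trans hcompeq).trans h1
  have h4 := (Λ.comp_inj _ _ rfl h3).2
  show (y.shift (Λ.d lam)).toFun 0 b zero_le = x.toFun 0 b zero_le
  have h5 : (y.shift (Λ.d lam)).toFun 0 b zero_le
      = y.toFun (Λ.d lam) (Λ.d lam + b) hle :=
    y.toFun_congr (add_zero _) rfl (add_le_add (le_refl _) zero_le) hle
  exact h5.trans h4

lemma extendPath_range (h : Λ.s lam = x.range) :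
    (Λ.extendPath lam x h).range = Λ.r lam := by
  have h1 : (Λ.extendPath lam x h).range = Λ.extendF lam x h 0 :=
    Λ.extendPath_toFun_zero lam x h 0
  exact h1.trans ((Λ.pfx_zero _ _).trans (Λ.r_comp _ _ _))

lemma extEq_extend (h : Λ.s lam = x.range) :
    Λ.ExtEq lam (Λ.extendPath lam x h) x :=
  ⟨Λ.extendPath_prefix lam x h, Λ.extendPath_shift lam x h⟩

lemma extEq_range {y : InfinitePath Λ} (hy : Λ.ExtEq lam y x) : y.range = Λ.r lam := by
  have h1 := y.rng 0 (Λ.d lam) zero_le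
  rw [hy.1] at h1
  exact h1.symm

lemma extEq_src {y : InfinitePath Λ} (hy : Λ.ExtEq lam y x) : x.range = Λ.s lam := by
  have h1 := y.src 0 (Λ.d lam) zero_le
  rw [hy.1] at h1
  have h2 : x.range = y.toFun (Λ.d lam) (Λ.d lam) le_rfl := by
    rw [← hy.2]
    exact y.toFun_congr (add_zero _) (add_zero _) (add_le_add (le_refl _) zero_le) le_rfl
  exact h2.trans h1.symm

lemma extEq_seg {y : InfinitePath Λ} (hy : Λ.ExtEq lam y x) (c : Fin k → ℕ)
    {b : Fin k → ℕ} (hb : Λ.d lam + c = b) (hlb : Λ.d lam ≤ b) :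
    y.toFun (Λ.d lam) b hlb = x.toFun 0 c zero_le := by
  have h1 := congrArg (fun z => InfinitePath.toFun z 0 c zero_le) hy.2
  have h2 : y.toFun (Λ.d lam) b hlb = (y.shift (Λ.d lam)).toFun 0 c zero_le :=
    y.toFun_congr (add_zero _).symm hb.symm hlb (add_le_add (le_refl _) zero_le)
  exact h2.trans h1

lemma extEq_toFun_zero {y : InfinitePath Λ} (hy : Λ.ExtEq lam y x) (b : Fin k → ℕ)
    (hlb : Λ.d lam ≤ b) :
    y.toFun 0 b zero_le
      = Λ.comp lam (x.toFun 0 (b - Λ.d lam) zero_le)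
          (Λ.extend_hc lam x (Λ.extEq_src lam x hy).symm _) := by
  have hcompeq := y.comp_eq 0 (Λ.d lam) b zero_le hlb (y.src_rng _ _ _)
  have hseg := Λ.extEq_seg lam x hy (b - Λ.d lam) (sub_add_of_le hlb) hlb
  exact hcompeq.symm.trans (Λ.comp_congr _ _ hy.1 hseg)

lemma extEq_unique {y1 y2 : InfinitePath Λ} (hy1 : Λ.ExtEq lam y1 x)
    (hy2 : Λ.ExtEq lam y2 x) : y1 = y2 := by
  apply InfinitePath.ext0
  intro b
  have hkey : y1.toFun 0 (b ⊔ Λ.d lam) zero_le = y2.toFun 0 (b ⊔ Λ.d lam) zero_le :=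
    (Λ.extEq_toFun_zero lam x hy1 _ le_sup_right).trans
      (Λ.extEq_toFun_zero lam x hy2 _ le_sup_right).symm
  have hc1 := y1.comp_eq 0 b (b ⊔ Λ.d lam) zero_le le_sup_left (y1.src_rng _ _ _)
  have hc2 := y2.comp_eq 0 b (b ⊔ Λ.d lam) zero_le le_sup_left (y2.src_rng _ _ _)
  exact (Λ.comp_inj _ _ (by rw [y1.d_eq, y2.d_eq]) (hc1.trans (hkey.trans hc2.symm))).1

end ExtendLemmas

end KGraph
namespace KGraph

variable {k : ℕ} (Λ : KGraph k)

lemma exists_edge_s (hsc : Λ.StronglyConnected) (i : Fin k) (v : Λ.Path) (hv : Λ.d v = 0) :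
    ∃ h : Λ.Path, Λ.d h = Pi.single i 1 ∧ Λ.s h = v := by
  obtain ⟨f, hf⟩ := Λ.edge_nonempty i
  obtain ⟨g, hg1, hg2⟩ := hsc (Λ.s f) v (Λ.d_s f) hv
  have hc : Λ.s f = Λ.r g := hg1.symm
  have hdc : Λ.d (Λ.comp f g hc) = Λ.d g + Pi.single i 1 := by
    rw [Λ.d_comp, hf, add_comm]
  obtain ⟨hcs, h1, h2, h3⟩ := Λ.split_spec (Λ.comp f g hc) (Λ.d g) (Pi.single i 1) hdc
  exact ⟨_, h2, ((Λ.s_comp _ _ hcs).symm.trans (congrArg Λ.s h3)).trans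
    ((Λ.s_comp f g hc).trans hg2)⟩

lemma exists_edge_r (hsc : Λ.StronglyConnected) (i : Fin k) (v : Λ.Path) (hv : Λ.d v = 0) :
    ∃ h : Λ.Path, Λ.d h = Pi.single i 1 ∧ Λ.r h = v := by
  obtain ⟨f, hf⟩ := Λ.edge_nonempty i
  obtain ⟨g, hg1, hg2⟩ := hsc v (Λ.r f) hv (Λ.d_r f)
  have hc : Λ.s g = Λ.r f := hg2
  have hdc : Λ.d (Λ.comp g f hc) = Pi.single i 1 + Λ.d g := by
    rw [Λ.d_comp, hf, add_comm]
  obtain ⟨hcs, h1, h2, h3⟩ := Λ.split_spec (Λ.comp g f hc) (Pi.single i 1) (Λ.d g) hdc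
  exact ⟨_, h1, ((Λ.r_comp _ _ hcs).symm.trans (congrArg Λ.r h3)).trans
    ((Λ.r_comp g f hc).trans hg1)⟩

lemma exists_s_pointed (hsc : Λ.StronglyConnected) :
    ∀ (N : ℕ) (c : Fin k → ℕ), (∑ i, c i) = N → ∀ v, Λ.d v = 0 →
      ∃ τ, Λ.d τ = c ∧ Λ.s τ = v := by
  intro N
  induction N with
  | zero =>
    intro c hc v hv
    have hc0 : c = 0 := by
      funext i
      have := Finset.sum_eq_zero_iff.mp hc i (Finset.mem_univ i)
      simpa using this
    exact ⟨v, by rw [hv, hc0], Λ.s_vertex v hv⟩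
  | succ N ih =>
    intro c hc v hv
    have hex : ∃ i, 0 < c i := by
      by_contra hno
      push_neg at hno
      have : ∑ i, c i = 0 := Finset.sum_eq_zero (fun i _ => Nat.le_zero.mp (hno i))
      omega
    obtain ⟨i, hi⟩ := hex
    obtain ⟨hpath, hd, hs⟩ := Λ.exists_edge_s hsc i v hv
    have hcc : c = (c - Pi.single i 1) + Pi.single i 1 := by
      funext j
      by_cases hji : j = i <;> simp [Pi.single_apply, hji] <;> omega
    have hsum : ∑ j, ((c - Pi.single i 1 : Fin k → ℕ) j) = N := by
      have h1 : ∑ j, c j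
          = ∑ j, (((c - Pi.single i 1 : Fin k → ℕ) j) + ((Pi.single i 1 : Fin k → ℕ) j)) := by
        refine Finset.sum_congr rfl (fun j _ => ?_)
        conv_lhs => rw [hcc]
        simp [Pi.single_apply]
      have h2 : ∑ j, (Pi.single i 1 : Fin k → ℕ) j = 1 := by
        simp [Pi.single_apply]
      rw [Finset.sum_add_distrib, h2] at h1
      omega
    obtain ⟨τ', hd', hs'⟩ := ih (c - Pi.single i 1) hsum (Λ.r hpath) (Λ.d_r hpath)
    refine ⟨Λ.comp τ' hpath hs', ?_, (Λ.s_comp _ _ _).trans hs⟩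
    rw [Λ.d_comp, hd', hd, ← hcc]

lemma exists_r_pointed (hsc : Λ.StronglyConnected) :
    ∀ (N : ℕ) (c : Fin k → ℕ), (∑ i, c i) = N → ∀ v, Λ.d v = 0 →
      ∃ τ, Λ.d τ = c ∧ Λ.r τ = v := by
  intro N
  induction N with
  | zero =>
    intro c hc v hv
    have hc0 : c = 0 := by
      funext i
      have := Finset.sum_eq_zero_iff.mp hc i (Finset.mem_univ i)
      simpa using this
    exact ⟨v, by rw [hv, hc0], Λ.r_vertex v hv⟩
  | succ N ih =>
    intro c hc v hv
    have hex : ∃ i, 0 < c i := by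
      by_contra hno
      push_neg at hno
      have : ∑ i, c i = 0 := Finset.sum_eq_zero (fun i _ => Nat.le_zero.mp (hno i))
      omega
    obtain ⟨i, hi⟩ := hex
    obtain ⟨hpath, hd, hr⟩ := Λ.exists_edge_r hsc i v hv
    have hcc : c = Pi.single i 1 + (c - Pi.single i 1) := by
      funext j
      by_cases hji : j = i <;> simp [Pi.single_apply, hji] <;> omega
    have hsum : ∑ j, ((c - Pi.single i 1 : Fin k → ℕ) j) = N := by
      have h1 : ∑ j, c j
          = ∑ j, (((Pi.single i 1 : Fin k → ℕ) j) + ((c - Pi.single i 1 : Fin k → ℕ) j)) := by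
        refine Finset.sum_congr rfl (fun j _ => ?_)
        conv_lhs => rw [hcc]
        simp [Pi.single_apply]
      have h2 : ∑ j, (Pi.single i 1 : Fin k → ℕ) j = 1 := by
        simp [Pi.single_apply]
      rw [Finset.sum_add_distrib, h2] at h1
      omega
    obtain ⟨τ', hd', hr'⟩ := ih (c - Pi.single i 1) hsum (Λ.s hpath) (Λ.d_s hpath)
    refine ⟨Λ.comp hpath τ' hr'.symm, ?_, (Λ.r_comp _ _ _).trans hr⟩
    rw [Λ.d_comp, hd', hd, ← hcc]

lemma exists_infinitePath (hsc : Λ.StronglyConnected) (v : Λ.Path) (hv : Λ.d v = 0) :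
    ∃ x : InfinitePath Λ, x.range = v := by
  classical
  have step : ∀ u : Λ.Path, Λ.d u = 0 →
      ∃ τ, Λ.d τ = (fun _ => 1) ∧ Λ.r τ = u := fun u hu =>
    Λ.exists_r_pointed hsc _ (fun _ => 1) rfl u hu
  let step' : Λ.Path → Λ.Path := fun p => (step (Λ.s p) (Λ.d_s p)).choose
  have hstep : ∀ p, Λ.d (step' p) = (fun _ => 1) ∧ Λ.r (step' p) = Λ.s p :=
    fun p => (step (Λ.s p) (Λ.d_s p)).choose_spec
  let B : ℕ → Λ.Path := fun j =>
    Nat.rec v (fun _ q => Λ.comp q (step' q) ((hstep q).2.symm)) j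
  have hBsucc : ∀ j, B (j + 1) = Λ.comp (B j) (step' (B j)) ((hstep (B j)).2.symm) :=
    fun j => rfl
  have hdB : ∀ j, Λ.d (B j) = fun _ => j := by
    intro j
    induction j with
    | zero => rw [show B 0 = v from rfl, hv]; rfl
    | succ j ihj =>
      rw [hBsucc j, Λ.d_comp, ihj, (hstep (B j)).1]
      funext i
      simp
  have hle : ∀ (a : Fin k → ℕ), a ≤ Λ.d (B (∑ i, a i)) := by
    intro a
    rw [hdB]
    intro i
    exact Finset.single_le_sum (f := fun j => a j) (fun _ _ => Nat.zero_le _)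
      (Finset.mem_univ i)
  have hstab : ∀ (a : Fin k → ℕ) (N : ℕ), (∀ i, a i ≤ N) → ∀ (M : ℕ), N ≤ M →
      ∀ (hM : a ≤ Λ.d (B M)) (hN : a ≤ Λ.d (B N)), Λ.pfx (B M) a hM = Λ.pfx (B N) a hN := by
    intro a N haN M hNM
    induction M, hNM using Nat.le_induction with
    | base => intro hM hN; rfl
    | succ M hNM ihM =>
      intro hM hN
      have haM : a ≤ Λ.d (B M) := by
        rw [hdB]; intro i; exact le_trans (haN i) hNM
      have := Λ.pfx_comp ((hstep (B M)).2.symm) a haM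
        (by rw [← hBsucc M]; exact hM)
      exact ((Λ.pfx_congr (hBsucc M) hM _).trans this).trans (ihM haM hN)
  let f : (Fin k → ℕ) → Λ.Path := fun a => Λ.pfx (B (∑ i, a i)) a (hle a)
  have hd : ∀ a, Λ.d (f a) = a := fun a => Λ.d_pfx _ _ _
  have hcoh : ∀ a b (hab : a ≤ b) (h' : a ≤ Λ.d (f b)), Λ.pfx (f b) a h' = f a := by
    intro a b hab h'
    have hsum : (∑ i, a i) ≤ ∑ i, b i := Finset.sum_le_sum (fun i _ => hab i)
    have h1 : a ≤ Λ.d (B (∑ i, b i)) := le_trans hab (hle b)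
    refine (Λ.pfx_pfx a b hab (hle b) h').trans ?_
    exact hstab a (∑ i, a i) (fun i => Finset.single_le_sum (f := fun j => a j)
      (fun _ _ => Nat.zero_le _) (Finset.mem_univ i)) (∑ i, b i) hsum h1 (hle a)
  refine ⟨Λ.ofTower f hd (fun a b hab => hcoh a b hab _), ?_⟩
  have h0 : (Λ.ofTower f hd (fun a b hab => hcoh a b hab _)).range = f 0 :=
    Λ.ofTower_toFun_zero f hd _ 0
  have hsum0 : (∑ i, (0 : Fin k → ℕ) i) = 0 := by simp
  have h1 : f 0 = Λ.pfx (B 0) 0 (by rw [hdB]; intro i; simp) :=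
    Λ.pfx_congr (congrArg B hsum0) _ _
  rw [h0, h1, Λ.pfx_zero]
  exact Λ.r_vertex v hv

end KGraph
namespace InfinitePath

variable {k : ℕ} {Λ : KGraph k}

lemma d_range (y : InfinitePath Λ) : Λ.d y.range = 0 :=
  (y.d_eq 0 0 le_rfl).trans (by funext i; simp)

end InfinitePath
/-- For `m − n ∈ Per Λ` and `μ ∈ Λ^m`, with `p := (m ∨ n) − m` and `q := (m ∨ n) − n`:
`Λ^min(θ_{m,n}(μ), μ) = {(α, θ_{q,p}(α)) : α ∈ s(μ)Λ^q}`. -/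
theorem minSet_theta {k : ℕ} (Λ : KGraph k)
    (hfin : Λ.IsFinite) (hsc : Λ.StronglyConnected)
    (m n : Fin k → ℕ) (hmn : (fun i => (m i : ℤ) - n i) ∈ Λ.Per)
    (μ : Λ.Path) (hμ : Λ.d μ = m) :
    ∀ ν : Λ.Path, Λ.IsTheta m n μ ν →
      Λ.minSet ν μ =
        {pr : Λ.Path × Λ.Path | Λ.d pr.1 = (m ⊔ n) - n ∧ Λ.r pr.1 = Λ.s μ ∧
          Λ.IsTheta ((m ⊔ n) - n) ((m ⊔ n) - m) pr.1 pr.2} := by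
  intro ν hθ
  obtain ⟨hθ1, hθ2, hθ3⟩ := hθ
  -- the source of ν equals the source of μ
  obtain ⟨x0, hx0⟩ := Λ.exists_infinitePath hsc (Λ.s μ) (Λ.d_s μ)
  obtain ⟨y0, hy0μ, hy0ν⟩ := hθ3 x0 hx0
  have hsνμ : Λ.s ν = Λ.s μ := ((Λ.extEq_src ν x0 hy0ν).symm.trans hx0).symm ▸ rfl
  ext ⟨α, β⟩
  simp only [KGraph.minSet, Set.mem_setOf_eq]
  constructor
  · rintro ⟨h1, h2, hcomp, hdeg⟩
    have hdα : Λ.d α = (m ⊔ n) - n := by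
      funext i
      have hi := congrFun hdeg i
      rw [hθ2, hμ] at hi
      simp only [Pi.add_apply, Pi.sup_apply] at hi
      simp only [Pi.sub_apply, Pi.sup_apply]
      omega
    have hdβ : Λ.d β = (m ⊔ n) - m := by
      have hde := congrArg Λ.d hcomp
      rw [Λ.d_comp, Λ.d_comp, hθ2, hμ] at hde
      funext i
      have hi := congrFun hde i
      have hαi := congrFun hdα i
      simp only [Pi.add_apply, Pi.sub_apply, Pi.sup_apply] at hi hαi ⊢
      omega
    have hrα : Λ.r α = Λ.s μ := h1.symm.trans hsνμ
    refine ⟨hdα, hrα, hdα, hdβ, ?_⟩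
    intro x hxr
    have hxc : Λ.s α = x.range := hxr.symm
    set y := Λ.extendPath α x hxc with hydef
    have hyα : Λ.ExtEq α y x := Λ.extEq_extend α x hxc
    have hyrange : y.range = Λ.s μ := (Λ.extendPath_range α x hxc).trans hrα
    -- apply IsTheta μ ν to y, and identify the resulting path with ν·y
    obtain ⟨z, hzμ, hzν⟩ := hθ3 y hyrange
    have hcY : Λ.s ν = y.range := (hsνμ.trans hyrange.symm)
    have hYν : Λ.ExtEq ν (Λ.extendPath ν y hcY) y := Λ.extEq_extend ν y hcY
    have hzY : z = Λ.extendPath ν y hcY := Λ.extEq_unique ν y hzν hYν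
    have hYμ : Λ.ExtEq μ (Λ.extendPath ν y hcY) y := hzY ▸ hzμ
    set Y := Λ.extendPath ν y hcY with hYdef
    -- decompose Y(0, m ⊔ n) in two ways
    have hbμ : Λ.d μ ≤ m ⊔ n := by rw [hμ]; exact le_sup_left
    have hbν : Λ.d ν ≤ m ⊔ n := by rw [hθ2]; exact le_sup_right
    have e1 := Λ.extEq_toFun_zero μ y hYμ (m ⊔ n) hbμ
    have e2 := Λ.extEq_toFun_zero ν y hYν (m ⊔ n) hbν
    have hyq : y.toFun 0 ((m ⊔ n) - Λ.d ν) zero_le = α := by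
      refine (y.toFun_congr rfl ?_ zero_le zero_le).trans hyα.1
      rw [hθ2, hdα]
    have hcompνα : Λ.comp ν (y.toFun 0 ((m ⊔ n) - Λ.d ν) zero_le)
          (Λ.extend_hc ν y (Λ.extEq_src ν y hYν).symm _)
        = Λ.comp ν α h1 := Λ.comp_congr _ _ rfl hyq
    have hcompall : Λ.comp μ (y.toFun 0 ((m ⊔ n) - Λ.d μ) zero_le)
          (Λ.extend_hc μ y (Λ.extEq_src μ y hYμ).symm _)
        = Λ.comp μ β h2 := by
      refine (e1.symm.trans (e2.trans ?_))
      exact hcompνα.trans (hcomp.symm ▸ hcomp)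
    have hyp : y.toFun 0 ((m ⊔ n) - Λ.d μ) zero_le = β :=
      (Λ.comp_inj _ _ rfl hcompall).2
    refine ⟨y, hyα, ?_, ?_⟩
    · -- y(0, d β) = β
      refine (y.toFun_congr rfl ?_ zero_le zero_le).trans hyp
      rw [hμ, hdβ]
    · -- shift (d β) y = x, via periodicity
      obtain ⟨m', n', hm'n', hper⟩ := hmn
      obtain ⟨τ, hdτ, hsτ⟩ := Λ.exists_s_pointed hsc (∑ i, n' i) n' rfl y.range y.d_range
      have hcw : Λ.s τ = y.range := hsτ
      set w := Λ.extendPath τ y hcw with hwdef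
      have hwy : w.shift n' = y := by
        rw [← hdτ]
        exact Λ.extendPath_shift τ y hcw
      have hkey : Λ.d β + m' = n' + Λ.d α := by
        funext i
        have hi : (m' i : ℤ) - n' i = (m i : ℤ) - n i := hm'n' i
        have hβi := congrFun hdβ i
        have hαi := congrFun hdα i
        simp only [Pi.add_apply, Pi.sub_apply, Pi.sup_apply] at hβi hαi ⊢
        omega
      calc y.shift (Λ.d β) = (w.shift n').shift (Λ.d β) := by rw [hwy]
        _ = w.shift (n' + Λ.d β) := w.shift_shift n' (Λ.d β)
        _ = w.shift (Λ.d β + n') := by rw [add_comm]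
        _ = (w.shift (Λ.d β)).shift n' := (w.shift_shift (Λ.d β) n').symm
        _ = (w.shift (Λ.d β)).shift m' := (hper (w.shift (Λ.d β))).symm
        _ = w.shift (Λ.d β + m') := w.shift_shift (Λ.d β) m'
        _ = w.shift (n' + Λ.d α) := by rw [hkey]
        _ = (w.shift n').shift (Λ.d α) := (w.shift_shift n' (Λ.d α)).symm
        _ = y.shift (Λ.d α) := by rw [hwy]
        _ = x := hyα.2
  · rintro ⟨hdα, hrα, htα, htβ, ht3⟩
    have h1 : Λ.s ν = Λ.r α := hsνμ.trans hrα.symm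
    obtain ⟨x1, hx1⟩ := Λ.exists_infinitePath hsc (Λ.s α) (Λ.d_s α)
    obtain ⟨y, hyα, hyβ⟩ := ht3 x1 hx1
    have h2 : Λ.s μ = Λ.r β :=
      hrα.symm.trans ((Λ.extEq_range α x1 hyα).symm.trans (Λ.extEq_range β x1 hyβ))
    have hyrange : y.range = Λ.s μ := (Λ.extEq_range α x1 hyα).trans hrα
    obtain ⟨z, hzμ, hzν⟩ := hθ3 y hyrange
    have hbμ : Λ.d μ ≤ m ⊔ n := by rw [hμ]; exact le_sup_left
    have hbν : Λ.d ν ≤ m ⊔ n := by rw [hθ2]; exact le_sup_right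
    have e1 := Λ.extEq_toFun_zero μ y hzμ (m ⊔ n) hbμ
    have e2 := Λ.extEq_toFun_zero ν y hzν (m ⊔ n) hbν
    have hyq : y.toFun 0 ((m ⊔ n) - Λ.d ν) zero_le = α := by
      refine (y.toFun_congr rfl ?_ zero_le zero_le).trans hyα.1
      rw [hθ2, htα]
    have hyp : y.toFun 0 ((m ⊔ n) - Λ.d μ) zero_le = β := by
      refine (y.toFun_congr rfl ?_ zero_le zero_le).trans hyβ.1
      rw [hμ, htβ]
    have hcompeq : Λ.comp ν α h1 = Λ.comp μ β h2 := by
      have hcν : Λ.comp ν α h1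
          = Λ.comp ν (y.toFun 0 ((m ⊔ n) - Λ.d ν) zero_le)
              (Λ.extend_hc ν y (Λ.extEq_src ν y hzν).symm _) :=
        Λ.comp_congr _ _ rfl hyq.symm
      have hcμ : Λ.comp μ (y.toFun 0 ((m ⊔ n) - Λ.d μ) zero_le)
            (Λ.extend_hc μ y (Λ.extEq_src μ y hzμ).symm _)
          = Λ.comp μ β h2 := Λ.comp_congr _ _ rfl hyp
      exact hcν.trans ((e2.symm.trans e1).trans hcμ)
    refine ⟨h1, h2, hcompeq, ?_⟩
    rw [hθ2, hμ, hdα]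
    funext i
    simp only [Pi.add_apply, Pi.sub_apply, Pi.sup_apply]
    omega
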